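/- Define g(ρ) = ((1+ρ)/2)·log(1+ρ) − ρ·log ρ − (1 − ρ/2)·log(2−ρ) for ρ ∈ (0,1). Then g has a unique root ρ* in (0,1), and g(ρ) < 0 for ρ < ρ* while g(ρ) > 0 for ρ > ρ*, with ρ* ∈ (0.25, 0.26). -/

import Mathlib

noncomputable def gfun (ρ : ℝ) : ℝ :=
  ((1+ρ)/2) * Real.log (1+ρ) - ρ * Real.log ρ - (1-ρ/2) * Real.log (2-ρ)

lemma gfun_hasDerivAt {x : ℝ} (hx : x ∈ Set.Ioo (0:ℝ) 1) :
    HasDerivAt gfun ((Real.log (1+x) + Real.log (2-x) - 2*Real.log x)/2) x := by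
  obtain ⟨hx0, hx1⟩ := hx
  have h1p : (0:ℝ) < 1 + x := by linarith
  have h2p : (0:ℝ) < 2 - x := by linarith
  have hA : HasDerivAt (fun y : ℝ => 1 + y) 1 x := (hasDerivAt_id x).const_add 1
  have hlogA : HasDerivAt (fun y : ℝ => Real.log (1+y)) (1/(1+x)) x :=
    hA.log (ne_of_gt h1p)
  have h1 : HasDerivAt (fun y : ℝ => (1+y)/2 * Real.log (1+y))
      ((1/2) * Real.log (1+x) + (1+x)/2 * (1/(1+x))) x :=
    (hA.div_const 2).mul hlogA
  have hlogx : HasDerivAt (fun y : ℝ => Real.log y) (1/x) x := by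
    simpa using (hasDerivAt_id x).log (ne_of_gt hx0)
  have h2 : HasDerivAt (fun y : ℝ => y * Real.log y)
      (1 * Real.log x + x * (1/x)) x := (hasDerivAt_id x).mul hlogx
  have hB : HasDerivAt (fun y : ℝ => 2 - y) (-1) x := (hasDerivAt_id x).const_sub 2
  have hlogB : HasDerivAt (fun y : ℝ => Real.log (2-y)) (-1/(2-x)) x :=
    hB.log (ne_of_gt h2p)
  have hC : HasDerivAt (fun y : ℝ => 1 - y/2) (-(1/2)) x := by
    simpa using ((hasDerivAt_id x).div_const 2).const_sub 1
  have h3 : HasDerivAt (fun y : ℝ => (1 - y/2) * Real.log (2-y))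
      ((-(1/2)) * Real.log (2-x) + (1-x/2) * (-1/(2-x))) x := hC.mul hlogB
  have h := (h1.sub h2).sub h3
  convert h using 1
  case e'_4 => rfl
  case e'_5 => rfl
  case e'_8 => rfl
  have h1ne : (1:ℝ)+x ≠ 0 := ne_of_gt h1p
  have h2ne : (2:ℝ)-x ≠ 0 := ne_of_gt h2p
  have hxne : x ≠ 0 := ne_of_gt hx0
  have e1 : (1+x)/2 * (1/(1+x)) = 1/2 := by field_simp
  have e2 : x * (1/x) = 1 := by field_simp
  have e3 : (1-x/2) * (-1/(2-x)) = -(1/2) := by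
    field_simp
  rw [e1, e2, e3]
  ring

lemma gfun_contOn : ContinuousOn gfun (Set.Ioo (0:ℝ) 1) :=
  fun x hx => ((gfun_hasDerivAt hx).continuousAt).continuousWithinAt

lemma gfun_mono : StrictMonoOn gfun (Set.Ioo (0:ℝ) 1) := by
  apply strictMonoOn_of_deriv_pos (convex_Ioo 0 1) gfun_contOn
  intro x hx
  rw [interior_Ioo] at hx
  rw [(gfun_hasDerivAt hx).deriv]
  obtain ⟨hx0, hx1⟩ := hx
  have h1p : (0:ℝ) < 1 + x := by linarith
  have h2p : (0:ℝ) < 2 - x := by linarith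
  have key : Real.log (x^2) < Real.log ((1+x)*(2-x)) := by
    apply Real.log_lt_log (by positivity)
    nlinarith
  rw [Real.log_mul (ne_of_gt h1p) (ne_of_gt h2p), Real.log_pow] at key
  push_cast at key
  linarith

lemma gfun_a : gfun (1/4) < 0 := by
  have l54 : Real.log ((5:ℝ)/4) = Real.log 5 - Real.log 4 :=
    Real.log_div (by norm_num) (by norm_num)
  have l14 : Real.log ((1:ℝ)/4) = - Real.log 4 := by
    rw [Real.log_div (by norm_num) (by norm_num), Real.log_one]; ring
  have l74 : Real.log ((7:ℝ)/4) = Real.log 7 - Real.log 4 :=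
    Real.log_div (by norm_num) (by norm_num)
  have key : Real.log ((5:ℝ)^5 * 4^4) < Real.log ((7:ℝ)^7) :=
    Real.log_lt_log (by positivity) (by norm_num)
  rw [Real.log_mul (by positivity) (by positivity), Real.log_pow, Real.log_pow,
    Real.log_pow] at key
  push_cast at key
  have e1 : (1:ℝ) + 1/4 = 5/4 := by norm_num
  have e2 : (2:ℝ) - 1/4 = 7/4 := by norm_num
  unfold gfun
  rw [e1, e2, l54, l14, l74]
  nlinarith [key]

lemma gfun_b : 0 < gfun (13/50) := by
  have l63 : Real.log ((63:ℝ)/50) = Real.log 63 - Real.log 50 :=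
    Real.log_div (by norm_num) (by norm_num)
  have l13 : Real.log ((13:ℝ)/50) = Real.log 13 - Real.log 50 :=
    Real.log_div (by norm_num) (by norm_num)
  have l87 : Real.log ((87:ℝ)/50) = Real.log 87 - Real.log 50 :=
    Real.log_div (by norm_num) (by norm_num)
  have key : Real.log ((13:ℝ)^26 * 87^87) < Real.log ((63:ℝ)^63 * 50^50) :=
    Real.log_lt_log (by positivity) (by norm_num)
  rw [Real.log_mul (by positivity) (by positivity),
    Real.log_mul (by positivity) (by positivity), Real.log_pow, Real.log_pow,
    Real.log_pow, Real.log_pow] at key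
  push_cast at key
  have e1 : (1:ℝ) + 13/50 = 63/50 := by norm_num
  have e2 : (2:ℝ) - 13/50 = 87/50 := by norm_num
  unfold gfun
  rw [e1, e2, l63, l13, l87]
  nlinarith [key]

theorem stmt_7 :
    ∃ ρs : ℝ, ρs ∈ Set.Ioo (0:ℝ) 1 ∧
      (fun ρ : ℝ => ((1+ρ)/2) * Real.log (1+ρ) - ρ * Real.log ρ
          - (1-ρ/2) * Real.log (2-ρ)) ρs = 0 ∧
      (∀ ρ ∈ Set.Ioo (0:ℝ) 1,
        ((1+ρ)/2) * Real.log (1+ρ) - ρ * Real.log ρ - (1-ρ/2) * Real.log (2-ρ) = 0 → ρ = ρs) ∧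
      (∀ ρ ∈ Set.Ioo (0:ℝ) 1, ρ < ρs →
        ((1+ρ)/2) * Real.log (1+ρ) - ρ * Real.log ρ - (1-ρ/2) * Real.log (2-ρ) < 0) ∧
      (∀ ρ ∈ Set.Ioo (0:ℝ) 1, ρs < ρ →
        0 < ((1+ρ)/2) * Real.log (1+ρ) - ρ * Real.log ρ - (1-ρ/2) * Real.log (2-ρ)) ∧
      0.25 < ρs ∧ ρs < 0.26 := by
  have hsub : Set.Icc (1/4 : ℝ) (13/50) ⊆ Set.Ioo (0:ℝ) 1 := by
    intro x hx; exact ⟨by linarith [hx.1], by linarith [hx.2]⟩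
  have hivt := intermediate_value_Ioo (by norm_num : (1/4 : ℝ) ≤ 13/50)
    (gfun_contOn.mono hsub)
  have h0 : (0:ℝ) ∈ Set.Ioo (gfun (1/4)) (gfun (13/50)) := ⟨gfun_a, gfun_b⟩
  obtain ⟨ρs, hρs, hval⟩ := hivt h0
  have hmem : ρs ∈ Set.Ioo (0:ℝ) 1 := ⟨by linarith [hρs.1], by linarith [hρs.2]⟩
  have hge : ∀ ρ ∈ Set.Ioo (0:ℝ) 1, ρs < ρ → 0 < gfun ρ := by
    intro ρ hρ h
    have := gfun_mono hmem hρ h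
    rw [hval] at this; exact this
  have hlt : ∀ ρ ∈ Set.Ioo (0:ℝ) 1, ρ < ρs → gfun ρ < 0 := by
    intro ρ hρ h
    have := gfun_mono hρ hmem h
    rw [hval] at this; exact this
  refine ⟨ρs, hmem, hval, ?_, hlt, hge, by linarith [hρs.1], by linarith [hρs.2]⟩
  intro ρ hρ hzero
  rcases lt_trichotomy ρ ρs with h | h | h
  · exact absurd hzero (ne_of_lt (hlt ρ hρ h))
  · exact h
  · exact absurd hzero.symm (ne_of_lt (hge ρ hρ h))
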